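/- Let F ∈ C²[0,∞) satisfy for all x > 0: F'(x) ≤ 0, 2xF'(x) - 2F(x) + 1 ≥ 0, and -x²F''(x) + 2xF'(x) - 2F(x) + 1 ≥ 0. Then the function g(x) := F'(x) + (1 - 2F(x))/x is nonincreasing and nonnegative on (0,∞). -/

import Mathlib

theorem stmt_15 (F : ℝ → ℝ) (hF : ContDiff ℝ 2 F)
    (hF' : ∀ x > (0:ℝ), deriv F x ≤ 0)
    (hwec : ∀ x > (0:ℝ), 2*x*deriv F x - 2*F x + 1 ≥ 0)
    (hdec : ∀ x > (0:ℝ),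
      -(x^2 * deriv (deriv F) x) + 2*x*deriv F x - 2*F x + 1 ≥ 0) :
    AntitoneOn (fun x => deriv F x + (1 - 2*F x)/x) (Set.Ioi (0:ℝ)) ∧
    ∀ x > (0:ℝ), deriv F x + (1 - 2*F x)/x ≥ 0 := by
  have h2 : ContDiff ℝ (1+1) F := by norm_num; exact hF
  obtain ⟨hFd, hF'c⟩ := contDiff_succ_iff_deriv.mp h2
  have hF'd : Differentiable ℝ (deriv F) := hF'c.2.differentiable one_ne_zero
  -- derivative of g
  have hg : ∀ x ∈ Set.Ioi (0:ℝ), HasDerivAt (fun x => deriv F x + (1 - 2*F x)/x)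
      (deriv (deriv F) x + ((-(2*deriv F x))*x - (1-2*F x)*1)/x^2) x := by
    intro x hx
    have hx0 : x ≠ 0 := ne_of_gt hx
    have h1 : HasDerivAt (fun y => 1 - 2*F y) (-(2*deriv F x)) x := by
      have := ((hFd x).hasDerivAt.const_mul 2).const_sub 1
      simpa using this
    exact (hF'd x).hasDerivAt.add (h1.div (hasDerivAt_id x) hx0)
  have hderiv : ∀ x ∈ Set.Ioi (0:ℝ), deriv (fun x => deriv F x + (1 - 2*F x)/x) x
      = deriv (deriv F) x + ((-(2*deriv F x))*x - (1-2*F x)*1)/x^2 :=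
    fun x hx => (hg x hx).deriv
  constructor
  · apply antitoneOn_of_deriv_nonpos (convex_Ioi 0)
    · exact fun x hx => ((hg x hx).continuousAt).continuousWithinAt
    · intro x hx
      rw [interior_Ioi] at hx
      exact ((hg x hx).differentiableAt).differentiableWithinAt
    · intro x hx
      rw [interior_Ioi] at hx
      rw [hderiv x hx]
      have hd := hdec x hx
      have hx0 : (0:ℝ) < x := hx
      have hx2 : (0:ℝ) < x^2 := by positivity
      rw [show deriv (deriv F) x + ((-(2*deriv F x))*x - (1-2*F x)*1)/x^2
        = (deriv (deriv F) x * x^2 + ((-(2*deriv F x))*x - (1-2*F x)*1))/x^2 from by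
          field_simp]
      apply div_nonpos_of_nonpos_of_nonneg _ (le_of_lt hx2)
      nlinarith [hd]
  · intro x hx
    have hw := hwec x hx
    have hf' := hF' x hx
    have h1 : (1 - 2*F x)/x ≥ -2*deriv F x := by
      rw [ge_iff_le, le_div_iff₀ hx]
      nlinarith
    nlinarith
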